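/- arXiv:1701.04772 — 3 statements merged into one kernel-verified Lean document; each statement's English description precedes it below -/
import Mathlib

section
/- In the algebraic model of a Lie algebroid, if the R-module L is faithful, then the anchor is a homomorphism of Lie algebras: for all X, Y ∈ L and all f ∈ R, ρ(⟦X,Y⟧)(f) = ρ(X)(ρ(Y)(f)) − ρ(Y)(ρ(X)(f)). -/
/-- In the algebraic model of a Lie algebroid, if the `R`-module `L` is
faithful, then the anchor is a homomorphism of Lie algebras:
`ρ(⁅X,Y⁆)(f) = ρ(X)(ρ(Y)(f)) − ρ(Y)(ρ(X)(f))` for all `X, Y ∈ L`, `f ∈ R`. -/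
theorem lieAlgebroid_anchor_is_lie_hom
    {R L : Type*} [CommRing R] [Algebra ℝ R]
    [LieRing L] [Module ℝ L] [LieAlgebra ℝ L] [Module R L]
    (ρ : L → Derivation ℝ R R)
    (leibniz : ∀ (X Y : L) (f : R), ⁅X, f • Y⁆ = f • ⁅X, Y⁆ + ρ X f • Y)
    (faithful : ∀ f : R, (∀ Z : L, f • Z = 0) → f = 0) :
    ∀ (X Y : L) (f : R), ρ ⁅X, Y⁆ f = ρ X (ρ Y f) - ρ Y (ρ X f) := by
  intro X Y f
  have key : ρ ⁅X, Y⁆ f - (ρ X (ρ Y f) - ρ Y (ρ X f)) = 0 := by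
    apply faithful
    intro Z
    have j := lie_lie X Y (f • Z)
    rw [leibniz Y Z f, lie_add, leibniz X (⁅Y, Z⁆) f, leibniz X Z (ρ Y f),
      leibniz X Z f, lie_add, leibniz Y (⁅X, Z⁆) f, leibniz Y Z (ρ X f),
      leibniz ⁅X, Y⁆ Z f] at j
    have j' : ρ ⁅X, Y⁆ f • Z = ρ X (ρ Y f) • Z - ρ Y (ρ X f) • Z := by
      have := j
      rw [add_comm] at this
      -- solve by linear algebra over the abelian group
      have h : f • ⁅⁅X, Y⁆, Z⁆ + ρ ⁅X, Y⁆ f • Z =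
          f • ⁅⁅X, Y⁆, Z⁆ + (ρ X (ρ Y f) • Z - ρ Y (ρ X f) • Z) := by
        calc f • ⁅⁅X, Y⁆, Z⁆ + ρ ⁅X, Y⁆ f • Z = _ := j
          _ = f • ⁅⁅X, Y⁆, Z⁆ + (ρ X (ρ Y f) • Z - ρ Y (ρ X f) • Z) := by
            rw [lie_lie, smul_sub]; abel
      exact add_left_cancel h
    rw [sub_smul, sub_smul, j']
    abel
  exact sub_eq_zero.mp key
end

section
/- Pointwise solvability criterion for the constrained presymplectic equation (general step of the constraint algorithm): for a covector α ∈ E* and a linear subspace F of E, there exists e ∈ F with Ω(e, ·) = α if and only if α(e') = 0 for every e' ∈ F^⊥. -/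
/-- The Ω-orthogonal complement `F^⊥ = {e ∈ E : Ω(e,f) = 0 for all f ∈ F}` of a
subspace `F` with respect to a bilinear form `Ω`. -/
def presympPerp {E : Type*} [AddCommGroup E] [Module ℝ E]
    (Ω : E →ₗ[ℝ] E →ₗ[ℝ] ℝ) (F : Submodule ℝ E) : Submodule ℝ E where
  carrier := {e | ∀ f ∈ F, Ω e f = 0}
  add_mem' := by
    intro a b ha hb f hf
    simp [ha f hf, hb f hf]
  zero_mem' := by
    intro f hf
    simp
  smul_mem' := by
    intro c a ha f hf
    simp [ha f hf]

/-- Pointwise solvability criterion for the constrained presymplectic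
equation (general step of the constraint algorithm): for a covector `α ∈ E*` and a
linear subspace `F` of `E`, there exists `e ∈ F` with `Ω(e, ·) = α` if and only if
`α(e') = 0` for every `e' ∈ F^⊥`. -/
theorem presymp_constrained_solvable_iff {E : Type*} [AddCommGroup E] [Module ℝ E]
    [FiniteDimensional ℝ E] (Ω : E →ₗ[ℝ] E →ₗ[ℝ] ℝ)
    (hΩ : ∀ e : E, Ω e e = 0) (F : Submodule ℝ E) (α : E →ₗ[ℝ] ℝ) :
    (∃ e ∈ F, Ω e = α) ↔ ∀ e' ∈ presympPerp Ω F, α e' = 0 := by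
  have skew : ∀ a b : E, Ω a b = - Ω b a := by
    intro a b
    have h := hΩ (a + b)
    simp only [map_add, LinearMap.add_apply, hΩ] at h
    linarith
  have hperp : (presympPerp Ω F : Set E) =
      ((F.map Ω : Submodule ℝ (Module.Dual ℝ E)).dualCoannihilator : Set E) := by
    ext e
    simp only [SetLike.mem_coe, Submodule.mem_dualCoannihilator]
    constructor
    · rintro he _ ⟨f, hf, rfl⟩
      have := he f hf
      rw [skew] at this
      linarith
    · intro he f hf
      have := he (Ω f) ⟨f, hf, rfl⟩
      rw [skew]
      simpa using this
  have hperp' : presympPerp Ω F = (F.map Ω).dualCoannihilator := SetLike.coe_injective hperp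
  constructor
  · rintro ⟨e, he, rfl⟩ e' he'
    rw [hperp'] at he'
    exact (Submodule.mem_dualCoannihilator e').mp he' (Ω e) ⟨e, he, rfl⟩
  · intro h
    have hα : α ∈ ((F.map Ω).dualCoannihilator).dualAnnihilator := by
      rw [Submodule.mem_dualAnnihilator]
      intro e' he'
      exact h e' (hperp' ▸ he')
    rw [Subspace.dualCoannihilator_dualAnnihilator_eq] at hα
    obtain ⟨e, he, heq⟩ := hα
    exact ⟨e, he, heq⟩
end

section
/- Reduction of the rigid-body optimality system to the cubic-spline equation on SO(3): if Ω, p, p̄ : ℝ → ℝ³ are differentiable curves satisfying, for all t, p'(t) = Ω(t) × p(t), Ω'(t) = p̄(t), and p̄'(t) = −p(t), then Ω is three times differentiable and satisfies the third-order equation Ω'''(t) = Ω(t) × Ω''(t), i.e. componentwise Ω'''₁ = Ω₂Ω̈₃ − Ω₃Ω̈₂, Ω'''₂ = Ω₃Ω̈₁ − Ω₁Ω̈₃, Ω'''₃ = Ω₁Ω̈₂ − Ω₂Ω̈₁. -/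
/-- Reduction of the rigid-body optimality system to the cubic-spline
equation on SO(3): if `Ω, p, pbar : ℝ → ℝ³` are differentiable curves satisfying, for
all `t`, `p' = Ω × p`, `Ω' = pbar` and `pbar' = −p`, then `Ω` is three times
differentiable and satisfies the third-order equation `Ω''' = Ω × Ω''`. -/
theorem rigidBody_cubic_spline_equation
    (Ω p pbar : ℝ → (Fin 3 → ℝ))
    (hp : ∀ t : ℝ, HasDerivAt p (crossProduct (Ω t) (p t)) t)
    (hΩ : ∀ t : ℝ, HasDerivAt Ω (pbar t) t)
    (hpbar : ∀ t : ℝ, HasDerivAt pbar (-(p t)) t) :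
    ∀ t : ℝ,
      HasDerivAt (deriv (deriv Ω)) (crossProduct (Ω t) (deriv (deriv Ω) t)) t := by
  have h1 : deriv Ω = pbar := funext fun t => (hΩ t).deriv
  have h2 : deriv (deriv Ω) = fun t => -(p t) := by
    rw [h1]; exact funext fun t => (hpbar t).deriv
  intro t
  rw [h2]
  have := (hp t).neg
  rw [map_neg]; exact this
end
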